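/- For every integer k ≥ 3, the binary form p_{2k}(x,y) = C(2k,k) x^k y^k of degree 2k satisfies L_ℝ(p_{2k}) = 2k. -/

import Mathlib

open MvPolynomial

open Finset

noncomputable def He (d : ℕ) (q : Polynomial ℝ) (a b : ℝ) : ℝ :=
  ∑ i ∈ Finset.range (d+1), q.coeff i * a^i * b^(d-i)

lemma He_linear (d : ℕ) (q : Polynomial ℝ) (hq : q.natDegree ≤ d) (A B a b : ℝ) :
    He (d+1) ((Polynomial.C B * Polynomial.X - Polynomial.C A) * q) a b
      = (B * a - A * b) * He d q a b := by
  have hcoeff : ∀ i, ((Polynomial.C B * Polynomial.X - Polynomial.C A) * q).coeff i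
      = B * (Polynomial.X * q).coeff i - A * q.coeff i := by
    intro i
    rw [sub_mul, Polynomial.coeff_sub, mul_assoc, Polynomial.coeff_C_mul, Polynomial.coeff_C_mul]
  unfold He
  calc ∑ i ∈ Finset.range (d+2),
        ((Polynomial.C B * Polynomial.X - Polynomial.C A) * q).coeff i * a^i * b^(d+1-i)
      = (∑ i ∈ Finset.range (d+2), B * (Polynomial.X * q).coeff i * a^i * b^(d+1-i))
        - ∑ i ∈ Finset.range (d+2), A * q.coeff i * a^i * b^(d+1-i) := by
        rw [← Finset.sum_sub_distrib]
        refine Finset.sum_congr rfl fun i _ => ?_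
        rw [hcoeff]; ring
    _ = (B * a) * (∑ i ∈ Finset.range (d+1), q.coeff i * a^i * b^(d-i))
        - (A * b) * (∑ i ∈ Finset.range (d+1), q.coeff i * a^i * b^(d-i)) := by
        congr 1
        · rw [Finset.sum_range_succ']
          have h0 : (Polynomial.X * q).coeff 0 = 0 := by
            simp [Polynomial.mul_coeff_zero]
          rw [h0]
          simp only [mul_zero, zero_mul, add_zero]
          rw [Finset.mul_sum]
          refine Finset.sum_congr rfl fun i hi => ?_
          rw [Polynomial.coeff_X_mul]
          have : d + 1 - (i + 1) = d - i := by omega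
          rw [this]; ring
        · rw [Finset.sum_range_succ]
          have hq1 : q.coeff (d+1) = 0 :=
            Polynomial.coeff_eq_zero_of_natDegree_lt (by omega)
          rw [hq1]
          simp only [mul_zero, zero_mul, add_zero]
          rw [Finset.mul_sum]
          refine Finset.sum_congr rfl fun i hi => ?_
          rw [Finset.mem_range] at hi
          have : d + 1 - i = (d - i) + 1 := by omega
          rw [this, pow_succ]; ring
    _ = (B * a - A * b) * ∑ i ∈ Finset.range (d+1), q.coeff i * a^i * b^(d-i) := by ring

lemma natDegree_linfac_le (A B : ℝ) :
    (Polynomial.C B * Polynomial.X - Polynomial.C A).natDegree ≤ 1 :=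
  le_trans (Polynomial.natDegree_sub_le _ _) (by
    simp only [max_le_iff]
    constructor
    · exact le_trans (Polynomial.natDegree_C_mul_le _ _) (le_of_eq Polynomial.natDegree_X)
    · simp [Polynomial.natDegree_C])

lemma He_prod {ι : Type*} (s : Finset ι) (A B : ι → ℝ) (a b : ℝ) :
    He s.card (∏ j ∈ s, (Polynomial.C (B j) * Polynomial.X - Polynomial.C (A j))) a b
      = ∏ j ∈ s, (B j * a - A j * b) := by
  classical
  induction s using Finset.cons_induction with
  | empty => simp [He]
  | cons j s hj ih =>
      rw [Finset.prod_cons, Finset.prod_cons, Finset.card_cons]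
      have hdeg : (∏ j ∈ s, (Polynomial.C (B j) * Polynomial.X - Polynomial.C (A j))).natDegree
          ≤ s.card := by
        refine le_trans (Polynomial.natDegree_prod_le _ _) ?_
        refine le_trans (Finset.sum_le_sum fun i _ => natDegree_linfac_le (A i) (B i)) ?_
        simp
      rw [He_linear s.card _ hdeg, ih]



lemma coeff_vanish {k r : ℕ} (hk : 3 ≤ k) (hr : r < 2*k)
    (lam al be : Fin r → ℝ)
    (hM : ∀ i ≤ 2*k, ∑ j, lam j * al j ^ i * be j ^ (2*k - i) = if i = k then 1 else 0)
    (i₀ : ℕ) (hi₀ : i₀ ≤ k) (hri : r ≤ k + i₀) :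
    (∏ j, (Polynomial.C (be j) * Polynomial.X - Polynomial.C (al j))).coeff i₀ = 0 := by
  set p := ∏ j, (Polynomial.C (be j) * Polynomial.X - Polynomial.C (al j)) with hp
  set s := k - i₀ with hs
  by_cases hi₀r : i₀ ≤ r
  swap
  · -- i₀ > r : coefficient vanishes by degree
    apply Polynomial.coeff_eq_zero_of_natDegree_lt
    have : p.natDegree ≤ r := by
      refine le_trans (Polynomial.natDegree_prod_le _ _) ?_
      refine le_trans (Finset.sum_le_sum fun i _ =>
        (le_trans (Polynomial.natDegree_sub_le _ _) (by
          simp only [max_le_iff]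
          exact ⟨le_trans (Polynomial.natDegree_C_mul_le _ _)
            (le_of_eq Polynomial.natDegree_X), by simp [Polynomial.natDegree_C]⟩))) ?_
      simp
    omega
  have hHe : ∀ j : Fin r, He r p (al j) (be j) = 0 := by
    intro j
    have := He_prod (Finset.univ : Finset (Fin r)) al be (al j) (be j)
    rw [Finset.card_univ, Fintype.card_fin] at this
    rw [hp, this]
    exact Finset.prod_eq_zero (Finset.mem_univ j) (by ring)
  have key : (0:ℝ) = p.coeff i₀ := by
    calc (0:ℝ) = ∑ j : Fin r, lam j * al j ^ s * be j ^ (2*k - r - s)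
        * He r p (al j) (be j) := by
          simp [hHe]
      _ = ∑ j : Fin r, ∑ i ∈ Finset.range (r+1),
            p.coeff i * (lam j * al j ^ (i + s) * be j ^ (2*k - (i + s))) := by
          refine Finset.sum_congr rfl fun j _ => ?_
          unfold He
          rw [Finset.mul_sum]
          refine Finset.sum_congr rfl fun i hi => ?_
          rw [Finset.mem_range] at hi
          have e1 : al j ^ (i + s) = al j ^ i * al j ^ s := pow_add _ _ _
          have e2 : 2*k - (i + s) = (2*k - r - s) + (r - i) := by omega
          rw [e1, e2, pow_add]; ring
      _ = ∑ i ∈ Finset.range (r+1), p.coeff i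
            * ∑ j : Fin r, lam j * al j ^ (i + s) * be j ^ (2*k - (i + s)) := by
          rw [Finset.sum_comm]
          exact Finset.sum_congr rfl fun i _ => by rw [Finset.mul_sum]
      _ = ∑ i ∈ Finset.range (r+1), p.coeff i * (if i = i₀ then 1 else 0) := by
          refine Finset.sum_congr rfl fun i hi => ?_
          rw [Finset.mem_range] at hi
          rw [hM (i + s) (by omega)]
          congr 1
          have h' : (i + s = k) ↔ (i = i₀) := by constructor <;> intro h <;> omega
          by_cases hii : i = i₀
          · simp [hii, hs]; omega
          · rw [if_neg hii, if_neg (fun hh => hii (h'.mp hh))]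
      _ = p.coeff i₀ := by
          rw [Finset.sum_congr rfl (fun i _ => by rw [mul_ite, mul_one, mul_zero]),
            Finset.sum_ite_eq' (Finset.range (r+1)) i₀ (fun i => p.coeff i)]
          simp [Finset.mem_range, Nat.lt_succ_iff, hi₀r]
  exact key.symm

lemma no_small_main {k r : ℕ} (hk : 3 ≤ k) (hr : r < 2*k)
    (lam al be : Fin r → ℝ)
    (hze : ∀ j, al j = 0 → be j ≠ 0)
    (hprop : ∀ j j' : Fin r, j ≠ j' → al j * be j' ≠ al j' * be j)
    (hM : ∀ i ≤ 2*k, ∑ j, lam j * al j ^ i * be j ^ (2*k - i) = if i = k then 1 else 0) :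
    False := by
  classical
  set p := ∏ j : Fin r, (Polynomial.C (be j) * Polynomial.X - Polynomial.C (al j)) with hp
  have hfac0 : ∀ j : Fin r, (Polynomial.C (be j) * Polynomial.X - Polynomial.C (al j)) ≠ 0 := by
    intro j h
    have h1 : be j = 0 := by
      have := congrArg (fun q => Polynomial.coeff q 1) h
      simpa using this
    have h0 : al j = 0 := by
      have := congrArg (fun q => Polynomial.coeff q 0) h
      simpa [h1] using this
    exact hze j h0 h1
  have hp0 : p ≠ 0 := Finset.prod_ne_zero_iff.mpr (fun j _ => hfac0 j)
  set n := (Finset.univ.filter fun j : Fin r => be j ≠ 0).card with hn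
  have hdeg : p.natDegree = n := by
    rw [hp, Polynomial.natDegree_prod _ _ (fun j _ => hfac0 j)]
    rw [hn, Finset.card_filter]
    refine Finset.sum_congr rfl fun j _ => ?_
    by_cases hb : be j = 0
    · rw [if_neg (by simp [hb]), hb]
      simp [Polynomial.natDegree_C]
    · rw [if_pos hb]
      rw [sub_eq_add_neg, ← Polynomial.C_neg]
      exact Polynomial.natDegree_linear hb
  have hroot : ∀ j : Fin r, be j ≠ 0 → (al j / be j) ∈ p.roots.toFinset := by
    intro j hb
    rw [Multiset.mem_toFinset, Polynomial.mem_roots hp0, hp, Polynomial.IsRoot,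
      Polynomial.eval_prod]
    refine Finset.prod_eq_zero (Finset.mem_univ j) ?_
    simp [mul_div_cancel₀ _ hb]
  have hinj : Set.InjOn (fun j => al j / be j)
      ↑(Finset.univ.filter fun j : Fin r => be j ≠ 0) := by
    intro j hj j' hj' heq
    simp only [Finset.coe_filter, Set.mem_setOf_eq] at hj hj'
    by_contra hne
    refine hprop j j' hne ?_
    exact div_eq_div_iff hj.2 hj'.2 |>.mp heq
  have htf : p.roots.toFinset.card = n := by
    have h1 : n ≤ p.roots.toFinset.card := by
      rw [hn]
      exact Finset.card_le_card_of_injOn _ (fun j hj => by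
        simp only [Finset.coe_filter, Finset.mem_filter, Set.mem_setOf_eq, Finset.mem_coe] at hj
        exact hroot j hj.2) hinj
    have h2 : p.roots.toFinset.card ≤ n := by
      calc p.roots.toFinset.card ≤ Multiset.card p.roots := Multiset.toFinset_card_le _
        _ ≤ p.natDegree := Polynomial.card_roots' p
        _ = n := hdeg
    omega
  have hcoeff : ∀ i₀, i₀ ≤ k → r ≤ k + i₀ → p.coeff i₀ = 0 := by
    intro i₀ h1 h2
    exact coeff_vanish hk hr lam al be hM i₀ h1 h2
  have hnr : n ≤ r := by
    rw [hn]
    exact le_trans (Finset.card_filter_le _ _) (by simp)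
  by_cases hrk : r ≤ k
  · have h0 : p.coeff n = 0 := hcoeff n (le_trans hnr hrk) (by omega)
    rw [← hdeg] at h0
    exact (Polynomial.leadingCoeff_ne_zero.mpr hp0) h0
  · push_neg at hrk
    set m := r - k with hm
    have hone : (Finset.univ.filter fun j : Fin r => ¬ be j ≠ 0).card ≤ 1 := by
      refine Finset.card_le_one.mpr (fun j hj j' hj' => ?_)
      simp only [Finset.mem_filter, not_not] at hj hj'
      by_contra hne
      exact hprop j j' hne (by rw [hj.2, hj'.2, mul_zero, mul_zero])
    have hnr1 : r ≤ n + 1 := by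
      have := Finset.card_filter_add_card_filter_not
        (s := (Finset.univ : Finset (Fin r))) (p := fun j => be j ≠ 0)
      rw [← hn] at this
      simp only [Finset.card_univ, Fintype.card_fin] at this
      omega
    have hmn : m + 2 ≤ n := by omega
    have hinv : ∀ i, i ≤ m → (Polynomial.derivative^[i] p).natDegree ≤ n - i ∧
        n - i ≤ (Polynomial.derivative^[i] p).roots.toFinset.card := by
      intro i hi
      induction i with
      | zero => simp [hdeg, htf]
      | succ i ih =>
        obtain ⟨ih1, ih2⟩ := ih (by omega)
        constructor
        · rw [Function.iterate_succ_apply']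
          calc (Polynomial.derivative (Polynomial.derivative^[i] p)).natDegree
              ≤ (Polynomial.derivative^[i] p).natDegree - 1 :=
                Polynomial.natDegree_derivative_le _
            _ ≤ n - (i+1) := by omega
        · rw [Function.iterate_succ_apply']
          have := Polynomial.card_roots_toFinset_le_derivative (Polynomial.derivative^[i] p)
          omega
    obtain ⟨hq1, hq2⟩ := hinv m (le_refl m)
    set q := Polynomial.derivative^[m] p with hq
    have hq0 : q ≠ 0 := by
      intro h
      rw [h] at hq2
      simp at hq2
      omega
    have hcards : Multiset.card q.roots = q.roots.toFinset.card := by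
      have h1 : q.roots.toFinset.card ≤ Multiset.card q.roots := Multiset.toFinset_card_le _
      have h2 : Multiset.card q.roots ≤ q.natDegree := Polynomial.card_roots' q
      omega
    have hnodup : q.roots.Nodup := Multiset.toFinset_card_eq_card_iff_nodup.mp hcards.symm
    have hc0 : q.coeff 0 = 0 := by
      rw [hq, Polynomial.coeff_iterate_derivative]
      rw [hcoeff (0 + m) (by omega) (by omega)]
      simp
    have hc1 : q.coeff 1 = 0 := by
      rw [hq, Polynomial.coeff_iterate_derivative]
      rw [hcoeff (1 + m) (by omega) (by omega)]
      simp
    have hdvd : (Polynomial.X : Polynomial ℝ) ^ 2 ∣ q := by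
      rw [Polynomial.X_pow_dvd_iff]
      intro d hd
      interval_cases d
      · exact hc0
      · exact hc1
    have hmult : 2 ≤ Polynomial.rootMultiplicity 0 q := by
      rw [Polynomial.le_rootMultiplicity_iff hq0]
      simpa using hdvd
    have hcount : q.roots.count 0 ≤ 1 := Multiset.nodup_iff_count_le_one.mp hnodup 0
    rw [Polynomial.count_roots] at hcount
    omega

lemma no_small {k : ℕ} (hk : 3 ≤ k) :
    ∀ r, r < 2*k → ∀ lam al be : Fin r → ℝ,
      ¬ (∀ i ≤ 2*k, ∑ j, lam j * al j ^ i * be j ^ (2*k - i) = if i = k then 1 else 0) := by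
  intro r
  induction r using Nat.strong_induction_on with
  | _ r IH =>
  intro hr lam al be hM
  match r, hr, lam, al, be, hM, IH with
  | 0, hr, lam, al, be, hM, IH =>
    have := hM k (by omega)
    simp at this
  | (r'+1), hr, lam, al, be, hM, IH =>
  by_cases hze : ∃ j, al j = 0 ∧ be j = 0
  · obtain ⟨j, hj1, hj2⟩ := hze
    refine IH r' (by omega) (by omega) (lam ∘ j.succAbove) (al ∘ j.succAbove)
      (be ∘ j.succAbove) (fun i hi => ?_)
    have h0 : lam j * al j ^ i * be j ^ (2*k - i) = 0 := by
      rcases Nat.eq_zero_or_pos i with h | h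
      · rw [hj2, zero_pow (by omega)]; ring
      · rw [hj1, zero_pow (by omega)]; ring
    have := hM i hi
    rw [Fin.sum_univ_succAbove _ j, h0, zero_add] at this
    exact this
  push_neg at hze
  by_cases hprop : ∃ j j' : Fin (r'+1), j ≠ j' ∧ al j * be j' = al j' * be j
  · obtain ⟨j, j', hne, hcross⟩ := hprop
    obtain ⟨c, hc1, hc2⟩ : ∃ c : ℝ, al j' = c * al j ∧ be j' = c * be j := by
      by_cases ha : al j = 0
      · have hb : be j ≠ 0 := fun h => (hze j ha h).elim
        refine ⟨be j' / be j, ?_, (div_mul_cancel₀ _ hb).symm⟩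
        have h1 : al j' * be j = 0 := by rw [← hcross, ha]; ring
        have h2 : al j' = 0 := by
          rcases mul_eq_zero.mp h1 with h | h
          · exact h
          · exact absurd h hb
        rw [h2, ha]; ring
      · refine ⟨al j' / al j, (div_mul_cancel₀ _ ha).symm, ?_⟩
        field_simp
        linear_combination hcross
    obtain ⟨j₀, hj₀⟩ := Fin.exists_succAbove_eq hne
    refine IH r' (by omega) (by omega)
      (Function.update (lam ∘ j'.succAbove) j₀ (lam j + lam j' * c^(2*k)))
      (al ∘ j'.succAbove) (be ∘ j'.succAbove) (fun i hi => ?_)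
    have hM' := hM i hi
    rw [Fin.sum_univ_succAbove _ j'] at hM'
    set g : Fin r' → ℝ := fun x => al (j'.succAbove x) ^ i * be (j'.succAbove x) ^ (2*k - i)
      with hg
    have hsplit : ∀ x : Fin r',
        (Function.update (lam ∘ j'.succAbove) j₀ (lam j + lam j' * c^(2*k))) x
          * al (j'.succAbove x) ^ i * be (j'.succAbove x) ^ (2*k - i)
        = (lam ∘ j'.succAbove) x * al (j'.succAbove x) ^ i * be (j'.succAbove x) ^ (2*k - i)
          + (if x = j₀ then lam j' * c^(2*k) * g j₀ else 0) := by
      intro x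
      by_cases hx : x = j₀
      · subst hx
        rw [Function.update_self, if_pos rfl, hg]
        simp only [Function.comp_apply, hj₀]
        ring
      · rw [Function.update_of_ne hx, if_neg hx, add_zero]
    simp only [Function.comp_apply]
    rw [Finset.sum_congr rfl (fun x _ => hsplit x), Finset.sum_add_distrib,
      Finset.sum_ite_eq' Finset.univ j₀ (fun _ => lam j' * c^(2*k) * g j₀),
      if_pos (Finset.mem_univ j₀)]
    have hterm : lam j' * al j' ^ i * be j' ^ (2*k - i) = lam j' * c^(2*k) * g j₀ := by
      rw [hc1, hc2, mul_pow, mul_pow, hg]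
      simp only [hj₀]
      have : c ^ i * c ^ (2*k - i) = c ^ (2*k) := by
        rw [← pow_add]; congr 1; omega
      calc lam j' * (c^i * al j ^ i) * (c^(2*k-i) * be j ^ (2*k-i))
          = lam j' * (c^i * c^(2*k-i)) * (al j ^ i * be j ^ (2*k-i)) := by ring
        _ = lam j' * c^(2*k) * (al j ^ i * be j ^ (2*k-i)) := by rw [this]
    rw [← hterm]
    calc (∑ x : Fin r', (lam ∘ j'.succAbove) x * al (j'.succAbove x) ^ i
            * be (j'.succAbove x) ^ (2*k - i)) + lam j' * al j' ^ i * be j' ^ (2*k-i)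
        = lam j' * al j' ^ i * be j' ^ (2*k-i)
          + ∑ x : Fin r', lam (j'.succAbove x) * al (j'.succAbove x) ^ i
            * be (j'.succAbove x) ^ (2*k - i) := by
          rw [add_comm]; rfl
      _ = if i = k then 1 else 0 := hM'
  · push_neg at hprop
    exact no_small_main hk hr lam al be hze hprop hM

lemma expand_sum (D r : ℕ) (lam al be : Fin r → ℝ) :
    ∑ j, (MvPolynomial.C (lam j) *
        (MvPolynomial.C (al j) * X 0 + MvPolynomial.C (be j) * X 1) ^ D
        : MvPolynomial (Fin 2) ℝ)
    = ∑ i ∈ Finset.range (D+1),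
        MvPolynomial.C ((∑ j, lam j * al j ^ i * be j ^ (D-i)) * (D.choose i))
          * X 0 ^ i * X 1 ^ (D-i) := by
  have hj : ∀ j : Fin r, (MvPolynomial.C (lam j) *
      (MvPolynomial.C (al j) * X 0 + MvPolynomial.C (be j) * X 1) ^ D
      : MvPolynomial (Fin 2) ℝ)
      = ∑ i ∈ Finset.range (D+1),
          MvPolynomial.C (lam j * al j ^ i * be j ^ (D-i) * (D.choose i))
            * X 0 ^ i * X 1 ^ (D-i) := by
    intro j
    rw [add_pow, Finset.mul_sum]
    refine Finset.sum_congr rfl fun i hi => ?_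
    rw [mul_pow, mul_pow, ← C_pow, ← C_pow]
    rw [(map_natCast (MvPolynomial.C : ℝ →+* MvPolynomial (Fin 2) ℝ) (D.choose i)).symm]
    simp only [map_mul]
    ring
  rw [Finset.sum_congr rfl (fun j _ => hj j), Finset.sum_comm]
  refine Finset.sum_congr rfl fun i _ => ?_
  rw [← Finset.sum_mul, ← Finset.sum_mul, ← map_sum, ← Finset.sum_mul]

lemma mono_indep (d : ℕ) (cf : ℕ → ℝ)
    (h : (∑ i ∈ Finset.range (d+1), MvPolynomial.C (cf i) * X 0 ^ i * X 1 ^ (d-i)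
        : MvPolynomial (Fin 2) ℝ) = 0) :
    ∀ i ≤ d, cf i = 0 := by
  intro i₀ hi₀
  have hterm : ∀ a : ℕ, (MvPolynomial.C (cf a) * X 0 ^ a * X 1 ^ (d-a)
      : MvPolynomial (Fin 2) ℝ)
      = monomial (Finsupp.single 0 a + Finsupp.single 1 (d-a)) (cf a) := by
    intro a
    rw [C_apply, X_pow_eq_monomial, X_pow_eq_monomial, monomial_mul, monomial_mul]
    simp
  have hcoeff := congrArg
    (MvPolynomial.coeff (Finsupp.single 0 i₀ + Finsupp.single 1 (d-i₀))) h
  rw [MvPolynomial.coeff_sum] at hcoeff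
  simp only [hterm, MvPolynomial.coeff_monomial] at hcoeff
  have hinjcond : ∀ a, a ∈ Finset.range (d+1) →
      ((Finsupp.single (0:Fin 2) a + Finsupp.single 1 (d-a)
        = Finsupp.single 0 i₀ + Finsupp.single 1 (d-i₀)) ↔ a = i₀) := by
    intro a _
    constructor
    · intro h'
      have := congrArg (fun f : Fin 2 →₀ ℕ => f 0) h'
      simpa [Finsupp.single_apply] using this
    · rintro rfl; rfl
  rw [Finset.sum_congr rfl (fun a ha => by
    rw [if_congr (hinjcond a ha) rfl rfl])] at hcoeff
  rw [Finset.sum_ite_eq' (Finset.range (d+1)) i₀ (fun a => cf a)] at hcoeff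
  simp only [Finset.mem_range, Nat.lt_succ_iff, hi₀, if_true] at hcoeff
  simpa using hcoeff

lemma vandermonde_solve {n : ℕ} (t : Fin n → ℝ) (ht : Function.Injective t) (u : ℕ → ℝ)
    (hu : ∑ i ∈ Finset.range (n+1),
        (∏ j, (Polynomial.X - Polynomial.C (t j))).coeff i * u i = 0) :
    ∃ c : Fin n → ℝ, ∀ i ≤ n, ∑ j, c j * t j ^ i = u i := by
  classical
  set g := ∏ j, (Polynomial.X - Polynomial.C (t j)) with hg
  have hmonic : g.Monic := Polynomial.monic_prod_of_monic _ _
    (fun j _ => Polynomial.monic_X_sub_C _)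
  have hgdeg : g.natDegree = n := by
    rw [hg, Polynomial.natDegree_prod _ _ (fun j _ => Polynomial.X_sub_C_ne_zero (t j))]
    simp [Polynomial.natDegree_X_sub_C]
  have hgeval : ∀ j, g.eval (t j) = 0 := by
    intro j
    rw [hg, Polynomial.eval_prod]
    exact Finset.prod_eq_zero (Finset.mem_univ j) (by simp)
  set A : Matrix (Fin (n+1)) (Fin n) ℝ := fun i j => t j ^ (i : ℕ) with hA
  set Φ : (Fin n → ℝ) →ₗ[ℝ] (Fin (n+1) → ℝ) := Matrix.mulVecLin A with hΦ
  set φ : (Fin (n+1) → ℝ) →ₗ[ℝ] ℝ :=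
    { toFun := fun v => ∑ i : Fin (n+1), g.coeff (i : ℕ) * v i
      map_add' := by
        intro x y
        simp only [Pi.add_apply, mul_add]
        rw [Finset.sum_add_distrib]
      map_smul' := by
        intro c x
        simp only [Pi.smul_apply, smul_eq_mul, RingHom.id_apply]
        rw [Finset.mul_sum]
        exact Finset.sum_congr rfl fun i _ => by ring } with hφ
  have hker : LinearMap.ker Φ = ⊥ := by
    rw [LinearMap.ker_eq_bot']
    intro c hc
    set B : Matrix (Fin n) (Fin n) ℝ := fun i j => t j ^ (i : ℕ) with hB
    have hBc : B.mulVec c = 0 := by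
      funext i
      have := congrFun hc (Fin.castSucc i)
      rw [hΦ] at this
      simp only [Matrix.mulVecLin_apply] at this
      simpa [hΦ, hA, hB, Matrix.mulVecLin_apply, Matrix.mulVec, dotProduct] using this
    have hdet : IsUnit B.det := by
      rw [isUnit_iff_ne_zero]
      have : B = (Matrix.vandermonde t).transpose := by
        funext i j
        simp [hB, Matrix.vandermonde]
      rw [this, Matrix.det_transpose, Matrix.det_vandermonde]
      refine Finset.prod_ne_zero_iff.mpr fun i _ => ?_
      refine Finset.prod_ne_zero_iff.mpr fun j hj => ?_
      rw [Finset.mem_Ioi] at hj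
      exact sub_ne_zero.mpr (fun h => (ne_of_gt hj) (ht h))
    calc c = (B⁻¹ * B).mulVec c := by rw [Matrix.nonsing_inv_mul B hdet, Matrix.one_mulVec]
      _ = B⁻¹.mulVec (B.mulVec c) := by rw [← Matrix.mulVec_mulVec]
      _ = 0 := by rw [hBc, Matrix.mulVec_zero]
  have hφap : ∀ v, φ v = ∑ i : Fin (n+1), g.coeff (i : ℕ) * v i := fun v => rfl
  have hrange_le : LinearMap.range Φ ≤ LinearMap.ker φ := by
    rintro v ⟨c, rfl⟩
    rw [LinearMap.mem_ker, hφap]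
    show ∑ i : Fin (n+1), g.coeff (i : ℕ) * (A.mulVec c) i = 0
    have : ∀ i : Fin (n+1), g.coeff (i:ℕ) * (A.mulVec c) i
        = ∑ j : Fin n, c j * (g.coeff (i:ℕ) * t j ^ (i:ℕ)) := by
      intro i
      rw [Matrix.mulVec, dotProduct, Finset.mul_sum]
      exact Finset.sum_congr rfl fun j _ => by simp [hA]; ring
    rw [Finset.sum_congr rfl (fun i _ => this i), Finset.sum_comm]
    rw [Finset.sum_eq_zero]
    intro j _
    rw [← Finset.mul_sum]
    have heval : ∑ i : Fin (n+1), g.coeff (i:ℕ) * t j ^ (i:ℕ) = g.eval (t j) := by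
      rw [Polynomial.eval_eq_sum_range' (lt_of_le_of_lt hgdeg.le (Nat.lt_succ_self n))]
      rw [← Fin.sum_univ_eq_sum_range]
    rw [heval, hgeval, mul_zero]
  have hrange : LinearMap.range Φ = LinearMap.ker φ := by
    refine Submodule.eq_of_le_of_finrank_le hrange_le ?_
    have h1 : Module.finrank ℝ (LinearMap.range Φ) = n := by
      have := LinearMap.finrank_range_add_finrank_ker Φ
      rw [hker, finrank_bot, Module.finrank_fin_fun] at this
      omega
    have h2 : Module.finrank ℝ (LinearMap.ker φ) = n := by
      have hrk := LinearMap.finrank_range_add_finrank_ker φ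
      rw [Module.finrank_fin_fun] at hrk
      have hphi1 : φ (fun i => if i = Fin.last n then 1 else 0) = 1 := by
        rw [hφap]
        rw [Finset.sum_congr rfl (fun i _ => by rw [mul_ite, mul_one, mul_zero]),
          Finset.sum_ite_eq' Finset.univ (Fin.last n) (fun i => g.coeff (i:ℕ))]
        simp only [Finset.mem_univ, if_true, Fin.val_last]
        rw [← hgdeg]
        exact hmonic.coeff_natDegree
      have hrtop : LinearMap.range φ = ⊤ := by
        rw [Submodule.eq_top_iff']
        intro x
        have h1m : (1:ℝ) ∈ LinearMap.range φ := ⟨_, hphi1⟩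
        have := Submodule.smul_mem (LinearMap.range φ) x h1m
        simpa using this
      rw [hrtop, finrank_top, Module.finrank_self] at hrk
      omega
    omega
  have humem : (fun i : Fin (n+1) => u (i:ℕ)) ∈ LinearMap.ker φ := by
    rw [LinearMap.mem_ker, hφap]
    rw [Fin.sum_univ_eq_sum_range (fun i => g.coeff i * u i) (n+1)]
    exact hu
  rw [← hrange] at humem
  obtain ⟨c, hc⟩ := humem
  refine ⟨c, fun i hi => ?_⟩
  have := congrFun hc ⟨i, Nat.lt_succ_of_le hi⟩
  rw [hΦ] at this
  simp only [Matrix.mulVecLin_apply] at this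
  rw [← this]
  rw [Matrix.mulVec, dotProduct]
  exact Finset.sum_congr rfl fun j _ => by simp [hA]; ring

lemma pair_factor (a : ℝ) : (Polynomial.X - Polynomial.C a) * (Polynomial.X + Polynomial.C a)
    = Polynomial.expand ℝ 2 (Polynomial.X - Polynomial.C (a^2)) := by
  rw [map_sub, Polynomial.expand_X, Polynomial.expand_C, map_pow]
  ring

lemma odd_witness {k : ℕ} (hk : 3 ≤ k) (hodd : ¬ 2 ∣ k) :
    ∃ t : Fin (2*k) → ℝ, Function.Injective t ∧
      (∏ j, (Polynomial.X - Polynomial.C (t j))).coeff k = 0 := by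
  set T : ℕ → ℤ := fun j => if j < k then (j:ℤ)+1 else -((j:ℤ)-k+1) with hT
  refine ⟨fun j => ((T (j:ℕ) : ℤ) : ℝ), ?_, ?_⟩
  · intro j j' h
    have h' : T (j:ℕ) = T (j':ℕ) := Int.cast_injective h
    simp only [hT] at h'
    split_ifs at h' <;> exact Fin.ext (by omega)
  · have hprod : (∏ j : Fin (2*k), (Polynomial.X - Polynomial.C ((T (j:ℕ) : ℤ) : ℝ)))
        = Polynomial.expand ℝ 2 (∏ i ∈ Finset.range k,
            (Polynomial.X - Polynomial.C (((i:ℝ)+1)^2))) := by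
      rw [Fin.prod_univ_eq_prod_range
        (fun i => Polynomial.X - Polynomial.C ((T i : ℤ) : ℝ)) (2*k)]
      rw [two_mul, Finset.prod_range_add, map_prod, ← Finset.prod_mul_distrib]
      refine Finset.prod_congr rfl fun i hi => ?_
      rw [Finset.mem_range] at hi
      have e1 : ((T i : ℤ) : ℝ) = (i:ℝ)+1 := by
        rw [hT]; simp only [if_pos hi]; push_cast; ring
      have e2 : ((T (k+i) : ℤ) : ℝ) = -((i:ℝ)+1) := by
        rw [hT]; simp only [if_neg (by omega : ¬ k+i < k)]; push_cast; ring
      rw [e1, e2, map_neg, sub_neg_eq_add, pair_factor]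
    rw [hprod, Polynomial.coeff_expand (by norm_num), if_neg hodd]

lemma even_witness {k : ℕ} (hk : 3 ≤ k) (heven : 2 ∣ k) :
    ∃ t : Fin (2*k-1) → ℝ, Function.Injective t ∧
      (∏ j, (Polynomial.X - Polynomial.C (t j))).coeff k = 0 := by
  set m := k - 1 with hm
  set T : ℕ → ℤ := fun j => if j = 0 then 0 else if j ≤ m then (j:ℤ) else -((j:ℤ)-m) with hT
  refine ⟨fun j => ((T (j:ℕ) : ℤ) : ℝ), ?_, ?_⟩
  · intro j j' h
    have h' : T (j:ℕ) = T (j':ℕ) := Int.cast_injective h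
    simp only [hT] at h'
    split_ifs at h' <;> exact Fin.ext (by omega)
  · have hsplit : 2*k-1 = 1 + m + m := by omega
    have hprod : (∏ j : Fin (2*k-1), (Polynomial.X - Polynomial.C ((T (j:ℕ) : ℤ) : ℝ)))
        = Polynomial.X * Polynomial.expand ℝ 2 (∏ i ∈ Finset.range m,
            (Polynomial.X - Polynomial.C (((i:ℝ)+1)^2))) := by
      rw [Fin.prod_univ_eq_prod_range
        (fun i => Polynomial.X - Polynomial.C ((T i : ℤ) : ℝ)) (2*k-1)]
      rw [hsplit, Finset.prod_range_add, Finset.prod_range_add, Finset.prod_range_one]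
      have e0 : ((T 0 : ℤ) : ℝ) = 0 := by rw [hT]; simp
      rw [e0, Polynomial.C_0, sub_zero, map_prod, mul_assoc, ← Finset.prod_mul_distrib]
      congr 1
      refine Finset.prod_congr rfl fun i hi => ?_
      rw [Finset.mem_range] at hi
      have e1 : ((T (1+i) : ℤ) : ℝ) = (i:ℝ)+1 := by
        rw [hT]
        simp only [if_neg (by omega : ¬ 1+i = 0), if_pos (by omega : 1+i ≤ m)]
        push_cast; ring
      have e2 : ((T (1+m+i) : ℤ) : ℝ) = -((i:ℝ)+1) := by
        rw [hT]
        simp only [if_neg (by omega : ¬ 1+m+i = 0), if_neg (by omega : ¬ 1+m+i ≤ m)]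
        push_cast; ring
      rw [e1, e2, map_neg, sub_neg_eq_add, pair_factor]
    have hksplit : k = (k-1)+1 := by omega
    rw [hprod, hksplit, Polynomial.coeff_X_mul, Polynomial.coeff_expand (by norm_num),
      if_neg (by omega : ¬ 2 ∣ (k-1))]

lemma sum_coeff_ite {N k : ℕ} (g : Polynomial ℝ) (hkN : k < N + 1) (hc : g.coeff k = 0) :
    ∑ i ∈ Finset.range (N+1), g.coeff i * (if i = k then (1:ℝ) else 0) = 0 := by
  rw [Finset.sum_congr rfl (fun i _ => by rw [mul_ite, mul_one, mul_zero]),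
    Finset.sum_ite_eq' (Finset.range (N+1)) k (fun i => g.coeff i)]
  simp [Finset.mem_range.mpr hkN, hc]

lemma exists_moments {k : ℕ} (hk : 3 ≤ k) :
    ∃ lam al be : Fin (2*k) → ℝ,
      ∀ i ≤ 2*k, ∑ j, lam j * al j ^ i * be j ^ (2*k-i) = if i = k then 1 else 0 := by
  by_cases hpar : 2 ∣ k
  · -- even k : use 2k-1 points plus the form y
    obtain ⟨t, htinj, hc⟩ := even_witness hk hpar
    have h1 : 2*k-1+1 = 2*k := by omega
    obtain ⟨c, hcm⟩ := vandermonde_solve t htinj (fun i => if i = k then 1 else 0)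
      (sum_coeff_ite _ (by omega) hc)
    classical
    set L : ℕ → ℝ := fun a => if h : a < 2*k-1 then c ⟨a, h⟩
      else -(∑ j, c j * t j ^ (2*k)) with hL
    set Aa : ℕ → ℝ := fun a => if a < 2*k-1 then 1 else 0 with hAa
    set Bb : ℕ → ℝ := fun a => if h : a < 2*k-1 then t ⟨a, h⟩ else 1 with hBb
    refine ⟨fun j => L (j:ℕ), fun j => Aa (j:ℕ), fun j => Bb (j:ℕ), fun i hi => ?_⟩
    show (∑ j : Fin (2*k), L (j:ℕ) * Aa (j:ℕ) ^ i * Bb (j:ℕ) ^ (2*k-i)) = _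
    rw [Fin.sum_univ_eq_sum_range (fun a => L a * Aa a ^ i * Bb a ^ (2*k-i)) (2*k)]
    rw [← h1, Finset.sum_range_succ, h1]
    have hmain : ∑ a ∈ Finset.range (2*k-1), L a * Aa a ^ i * Bb a ^ (2*k-i)
        = ∑ j : Fin (2*k-1), c j * t j ^ (2*k-i) := by
      rw [← Fin.sum_univ_eq_sum_range (fun a => L a * Aa a ^ i * Bb a ^ (2*k-i)) (2*k-1)]
      refine Finset.sum_congr rfl fun j _ => ?_
      have hj : (j:ℕ) < 2*k-1 := j.isLt
      rw [hL, hAa, hBb]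
      simp only [dif_pos hj, if_pos hj, Fin.eta, one_pow, mul_one]
    have hlast1 : L (2*k-1) = -(∑ j, c j * t j ^ (2*k)) := by
      rw [hL]; simp only [dif_neg (lt_irrefl (2*k-1))]
    have hlast2 : Aa (2*k-1) = 0 := by rw [hAa]; simp
    have hlast3 : Bb (2*k-1) = 1 := by rw [hBb]; simp
    rw [hmain, hlast1, hlast2, hlast3, one_pow, mul_one]
    rcases Nat.eq_zero_or_pos i with hi0 | hipos
    · subst hi0
      rw [pow_zero, mul_one]
      have h20 : (2*k - 0) = 2*k := by omega
      rw [h20, add_neg_cancel, if_neg (by omega : ¬ (0:ℕ) = k)]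
    · rw [zero_pow (by omega : i ≠ 0), mul_zero, add_zero]
      have h2 : 2*k - i ≤ 2*k-1 := by omega
      rw [hcm (2*k-i) h2]
      have : (2*k - i = k) ↔ (i = k) := by omega
      by_cases hik : i = k
      · rw [if_pos (this.mpr hik), if_pos hik]
      · rw [if_neg (fun hh => hik (this.mp hh)), if_neg hik]
  · -- odd k
    obtain ⟨t, htinj, hc⟩ := odd_witness hk hpar
    obtain ⟨c, hcm⟩ := vandermonde_solve t htinj (fun i => if i = k then 1 else 0)
      (sum_coeff_ite _ (by omega) hc)
    refine ⟨c, fun _ => 1, t, fun i hi => ?_⟩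
    have hstep : ∑ j, c j * (1:ℝ) ^ i * t j ^ (2*k-i) = ∑ j, c j * t j ^ (2*k-i) := by
      refine Finset.sum_congr rfl fun j _ => by rw [one_pow, mul_one]
    rw [hstep, hcm (2*k-i) (by omega)]
    have : (2*k - i = k) ↔ (i = k) := by omega
    by_cases hik : i = k
    · rw [if_pos (this.mpr hik), if_pos hik]
    · rw [if_neg (fun hh => hik (this.mp hh)), if_neg hik]

/-- The real rank (length) of a real binary form `f` of degree `d`. -/
noncomputable def LrankR (d : ℕ) (f : MvPolynomial (Fin 2) ℝ) : ℕ∞ :=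
  sInf { n : ℕ∞ | ∃ r : ℕ, n = (r : ℕ∞) ∧ ∃ lam al be : Fin r → ℝ,
    f = ∑ j, MvPolynomial.C (lam j) *
      (MvPolynomial.C (al j) * X 0 + MvPolynomial.C (be j) * X 1) ^ d }

lemma target_split (k : ℕ) (hk : 3 ≤ k) :
    (MvPolynomial.C (((2 * k).choose k : ℕ) : ℝ) * X 0 ^ k * X 1 ^ k
      : MvPolynomial (Fin 2) ℝ)
    = ∑ i ∈ Finset.range (2*k+1),
        MvPolynomial.C (if i = k then (((2 * k).choose k : ℕ) : ℝ) else 0)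
          * X 0 ^ i * X 1 ^ (2*k-i) := by
  rw [Finset.sum_eq_single k]
  · rw [if_pos rfl]
    congr 2
    omega
  · intro i _ hik
    rw [if_neg hik, map_zero, zero_mul, zero_mul]
  · intro h
    exact absurd (Finset.mem_range.mpr (by omega)) h

/-- For `k ≥ 3`, the form `p_{2k} = C(2k,k) x^k y^k` has real rank `2k`. -/
theorem realRank_p_even (k : ℕ) (hk : 3 ≤ k) :
    LrankR (2 * k)
      (MvPolynomial.C (((2 * k).choose k : ℕ) : ℝ) * X 0 ^ k * X 1 ^ k)
      = ((2 * k : ℕ) : ℕ∞) := by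
  unfold LrankR
  apply le_antisymm
  · -- upper bound
    apply sInf_le
    obtain ⟨lam, al, be, hM⟩ := exists_moments hk
    refine ⟨2*k, rfl, lam, al, be, ?_⟩
    rw [expand_sum (2*k) (2*k) lam al be, target_split k hk]
    refine Finset.sum_congr rfl fun i hi => ?_
    rw [Finset.mem_range] at hi
    rw [hM i (by omega)]
    by_cases hik : i = k
    · rw [if_pos hik, if_pos hik, one_mul, hik]
    · rw [if_neg hik, if_neg hik, zero_mul]
  · -- lower bound
    apply le_sInf
    rintro b ⟨r, rfl, lam, al, be, hident⟩
    refine Nat.cast_le.mpr ?_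
    by_contra hlt
    push_neg at hlt
    rw [expand_sum (2*k) r lam al be, target_split k hk] at hident
    have hzero : (∑ i ∈ Finset.range (2*k+1),
        MvPolynomial.C ((if i = k then (((2 * k).choose k : ℕ) : ℝ) else 0)
          - (∑ j, lam j * al j ^ i * be j ^ (2*k-i)) * ((2*k).choose i))
          * X 0 ^ i * X 1 ^ (2*k-i) : MvPolynomial (Fin 2) ℝ) = 0 := by
      rw [Finset.sum_congr rfl (fun i _ => by
        rw [map_sub, sub_mul, sub_mul])]
      rw [Finset.sum_sub_distrib, hident, sub_self]
    have hcf := mono_indep (2*k) _ hzero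
    refine no_small hk r hlt lam al be (fun i hi => ?_)
    have := hcf i (by omega)
    have hchoose : (((2*k).choose i : ℕ) : ℝ) ≠ 0 := by
      have : 0 < (2*k).choose i := Nat.choose_pos (by omega)
      positivity
    by_cases hik : i = k
    · rw [if_pos hik] at this ⊢
      rw [hik] at this hchoose ⊢
      have hS : (∑ j, lam j * al j ^ k * be j ^ (2*k-k)) * (((2*k).choose k : ℕ) : ℝ)
          = 1 * (((2*k).choose k : ℕ) : ℝ) := by linarith
      exact mul_right_cancel₀ hchoose hS
    · rw [if_neg hik] at this ⊢
      have h2 : (∑ j, lam j * al j ^ i * be j ^ (2*k-i)) * (((2*k).choose i : ℕ) : ℝ) = 0 := by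
        linarith
      rcases mul_eq_zero.mp h2 with h | h
      · exact h
      · exact absurd h hchoose
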